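/- Let α_1, α_2, α_3 be nonzero integers. Then there exist nonzero integers γ_1, γ_2, γ_3 such that α_1·γ_1 + α_2·γ_2 + α_3·γ_3 = 0 and, for every combination f : {1,2,3} → {1,2,3} that is forbidden and non-constant, α_1·γ_{f(1)} + α_2·γ_{f(2)} + α_3·γ_{f(3)} ≠ 0. -/

import Mathlib

/-- A combination `f : {1,2,3} → {1,2,3}` is allowed (w.r.t. coefficients `α`) if for every
`i` the image under `f` of the set of indices with the same coefficient as `α i` equals
that set; otherwise it is forbidden. -/
def Allowed (α : Fin 3 → ℤ) (f : Fin 3 → Fin 3) : Prop :=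
  ∀ i : Fin 3,
    Finset.image f (Finset.univ.filter fun x => α x = α i) =
      Finset.univ.filter fun x => α x = α i

/-- A combination is constant if it takes a single value. -/
def IsConstantComb (f : Fin 3 → Fin 3) : Prop := ∃ j : Fin 3, ∀ i, f i = j

private lemma allowed_of_inj (α : Fin 3 → ℤ) (f : Fin 3 → Fin 3)
    (hinj : Function.Injective f) (hpres : ∀ i, α (f i) = α i) : Allowed α f := by
  intro i
  have hsub : Finset.image f (Finset.univ.filter fun x => α x = α i) ⊆
      Finset.univ.filter fun x => α x = α i := by
    intro y hy
    simp only [Finset.mem_image, Finset.mem_filter, Finset.mem_univ, true_and] at hy ⊢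
    obtain ⟨x, hx, rfl⟩ := hy
    rw [hpres x]; exact hx
  exact Finset.eq_of_subset_of_card_le hsub
    (le_of_eq (Finset.card_image_of_injective _ hinj).symm)

private lemma key (α : Fin 3 → ℤ) (hα : ∀ i, α i ≠ 0) (f : Fin 3 → Fin 3)
    (h1 : ∑ i, α i * (![α 1, -α 0, 0] : Fin 3 → ℤ) (f i) = 0)
    (h2 : ∑ i, α i * (![0, α 2, -α 1] : Fin 3 → ℤ) (f i) = 0) :
    Allowed α f ∨ IsConstantComb f := by
  have n0 := hα 0; have n1 := hα 1; have n2 := hα 2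
  obtain ⟨a, b, c, rfl⟩ : ∃ a b c, f = ![a, b, c] :=
    ⟨f 0, f 1, f 2, by funext i; fin_cases i <;> rfl⟩
  simp only [Fin.sum_univ_three] at h1 h2
  fin_cases a <;> fin_cases b <;> fin_cases c <;>
      simp only [Fin.mk_zero, Fin.mk_one, show (⟨2, by omega⟩ : Fin 3) = 2 from rfl,
        Matrix.cons_val_zero, Matrix.cons_val_one, Matrix.head_cons,
        Matrix.cons_val_two, Matrix.tail_cons, Fin.isValue, mul_zero, mul_neg,
        add_zero, zero_add] at h1 h2
  -- (0,0,0)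
  · exact Or.inr ⟨0, by decide⟩
  -- (0,0,1)
  · exact ((mul_ne_zero n2 n2) (by linear_combination h2)).elim
  -- (0,0,2)
  · exact ((mul_ne_zero n1 n2) (by linear_combination -h2)).elim
  -- (0,1,0)
  · exact ((mul_ne_zero n1 n2) (by linear_combination h2)).elim
  -- (0,1,1)
  · exact ((mul_ne_zero n0 n2) (by linear_combination -h1)).elim
  -- (0,1,2) identity
  · exact Or.inl (allowed_of_inj α _ (by decide) (fun i => by fin_cases i <;> rfl))
  -- (0,2,0)
  · exact ((mul_ne_zero n1 n1) (by linear_combination -h2)).elim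
  -- (0,2,1) : swap 1,2 ; need α 1 = α 2
  · have hs : α 0 * (α 1 - α 2) = 0 := by linear_combination h1
    have h12 : α 1 = α 2 := by
      rcases mul_eq_zero.mp hs with h | h
      · exact (n0 h).elim
      · linarith
    refine Or.inl (allowed_of_inj α _ (by decide) ?_)
    intro i; fin_cases i <;> simp <;> linarith
  -- (0,2,2)
  · exact ((mul_ne_zero n0 n1) (by linear_combination h1)).elim
  -- (1,0,0)
  · exact ((mul_ne_zero n0 n2) (by linear_combination h2)).elim
  -- (1,0,1)
  · have hs : α 2 * (α 0 + α 2) = 0 := by linear_combination h2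
    have h' : α 0 + α 2 = 0 := by
      rcases mul_eq_zero.mp hs with h | h
      · exact (n2 h).elim
      · exact h
    exact (n1 (mul_self_eq_zero.mp (by linear_combination h1 + α 0 * h'))).elim
  -- (1,0,2) : swap 0,1 ; need α 0 = α 1
  · have hs : α 2 * (α 0 - α 1) = 0 := by linear_combination h2
    have h01 : α 0 = α 1 := by
      rcases mul_eq_zero.mp hs with h | h
      · exact (n2 h).elim
      · linarith
    refine Or.inl (allowed_of_inj α _ (by decide) ?_)
    intro i; fin_cases i <;> simp <;> linarith
  -- (1,1,0)
  · have hs : α 2 * (α 0 + α 1) = 0 := by linear_combination h2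
    have h' : α 0 + α 1 = 0 := by
      rcases mul_eq_zero.mp hs with h | h
      · exact (n2 h).elim
      · exact h
    exact ((mul_ne_zero n0 n2)
      (by linear_combination -h1 + (α 2 - α 0) * h' : α 0 * α 2 = 0)).elim
  -- (1,1,1)
  · exact Or.inr ⟨1, by decide⟩
  -- (1,1,2)
  · exact ((mul_ne_zero n0 n2) (by linear_combination h2)).elim
  -- (1,2,0) : 3-cycle ; need α 0 = α 1 = α 2
  · -- h1 : α 1 * α 2 - α 0 ^ 2 = 0, h2 : α 0 * α 2 - α 1 ^ 2 = 0
    have h3 : α 0 * (α 0 * α 1 - α 2 * α 2) = 0 := by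
      linear_combination (-α 1) * h1 + (-α 2) * h2
    have hc : α 0 * α 1 - α 2 * α 2 = 0 := by
      rcases mul_eq_zero.mp h3 with h | h
      · exact (n0 h).elim
      · exact h
    have h4 : (α 0 - α 2) * (α 0 * α 0 + α 0 * α 2 + α 2 * α 2) = 0 := by
      linear_combination (-α 0) * h1 + α 2 * hc
    have h02 : α 0 = α 2 := by
      rcases mul_eq_zero.mp h4 with h | h
      · linarith
      · nlinarith [sq_nonneg (2 * α 0 + α 2), mul_self_pos.mpr n2]
    have h01 : α 0 = α 1 := by
      have h5 : α 0 * (α 1 - α 0) = 0 := by linear_combination h1 + α 1 * h02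
      rcases mul_eq_zero.mp h5 with h | h
      · exact (n0 h).elim
      · linarith
    refine Or.inl (allowed_of_inj α _ (by decide) ?_)
    intro i; fin_cases i <;> simp <;> linarith
  -- (1,2,1)
  · have hs : α 0 * (α 0 + α 2) = 0 := by linear_combination -h1
    have h' : α 0 + α 2 = 0 := by
      rcases mul_eq_zero.mp hs with h | h
      · exact (n0 h).elim
      · exact h
    exact (n1 (mul_self_eq_zero.mp (by linear_combination -h2 + α 2 * h'))).elim
  -- (1,2,2)
  · exact ((mul_ne_zero n0 n0) (by linear_combination -h1)).elim
  -- (2,0,0)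
  · exact ((mul_ne_zero n0 n1) (by linear_combination -h2)).elim
  -- (2,0,1) : 3-cycle ; need equalities
  · -- h1 : α 1 ^2 - α 0 * α 2 = 0, h2 : α 2 ^2 - α 0 * α 1 = 0
    have h3 : α 1 * (α 1 * α 2 - α 0 * α 0) = 0 := by
      linear_combination α 2 * h1 + α 0 * h2
    have hc : α 1 * α 2 - α 0 * α 0 = 0 := by
      rcases mul_eq_zero.mp h3 with h | h
      · exact (n1 h).elim
      · exact h
    have h4 : (α 0 - α 1) * (α 0 * α 0 + α 0 * α 1 + α 1 * α 1) = 0 := by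
      linear_combination (-α 0) * hc + (-α 1) * h1
    have h01 : α 0 = α 1 := by
      rcases mul_eq_zero.mp h4 with h | h
      · linarith
      · nlinarith [sq_nonneg (2 * α 0 + α 1), mul_self_pos.mpr n1]
    have h02 : α 0 = α 2 := by
      have h5 : α 0 * (α 2 - α 0) = 0 := by linear_combination hc + α 2 * h01
      rcases mul_eq_zero.mp h5 with h | h
      · exact (n0 h).elim
      · linarith
    refine Or.inl (allowed_of_inj α _ (by decide) ?_)
    intro i; fin_cases i <;> simp <;> linarith
  -- (2,0,2)
  · exact ((mul_ne_zero n1 n1) (by linear_combination h1)).elim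
  -- (2,1,0) : swap 0,2 ; need α 0 = α 2
  · have hs : α 1 * (α 2 - α 0) = 0 := by linear_combination h1
    have h02 : α 0 = α 2 := by
      rcases mul_eq_zero.mp hs with h | h
      · exact (n1 h).elim
      · linarith
    refine Or.inl (allowed_of_inj α _ (by decide) ?_)
    intro i; fin_cases i <;> simp <;> linarith
  -- (2,1,1)
  · have hs : α 0 * (α 1 + α 2) = 0 := by linear_combination -h1
    have h' : α 1 + α 2 = 0 := by
      rcases mul_eq_zero.mp hs with h | h
      · exact (n0 h).elim
      · exact h
    exact ((mul_ne_zero n0 n1)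
      (by linear_combination -h2 + α 2 * h' : α 0 * α 1 = 0)).elim
  -- (2,1,2)
  · exact ((mul_ne_zero n0 n1) (by linear_combination -h1)).elim
  -- (2,2,0)
  · exact ((mul_ne_zero n1 n2) (by linear_combination h1)).elim
  -- (2,2,1)
  · exact ((mul_ne_zero n0 n2) (by linear_combination -h1)).elim
  -- (2,2,2)
  · exact Or.inr ⟨2, by decide⟩

private lemma lin_ne (a b t : ℤ) (h : |a| < t) (hb : b ≠ 0) : a + t * b ≠ 0 := by
  intro h0
  have ht : 0 < t := lt_of_le_of_lt (abs_nonneg a) h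
  have h1 : (1:ℤ) ≤ |b| := Int.one_le_abs hb
  have h2 : t ≤ |a| := by
    have ha : a = -(t * b) := by linarith
    rw [ha, abs_neg, abs_mul, abs_of_pos ht]
    nlinarith
  linarith

theorem stmt_9 (α : Fin 3 → ℤ) (hα : ∀ i, α i ≠ 0) :
    ∃ γ : Fin 3 → ℤ, (∀ i, γ i ≠ 0) ∧ (∑ i, α i * γ i = 0) ∧
      ∀ f : Fin 3 → Fin 3, ¬ Allowed α f → ¬ IsConstantComb f →
        ∑ i, α i * γ (f i) ≠ 0 := by
  classical
  set v : Fin 3 → ℤ := ![α 1, -α 0, 0] with hv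
  set w : Fin 3 → ℤ := ![0, α 2, -α 1] with hw
  set t : ℤ := 1 + |α 0| + (|α 0| + |α 1| + |α 2|) * (|α 0| + |α 1|) with htdef
  have hBnn : (0:ℤ) ≤ (|α 0| + |α 1| + |α 2|) * (|α 0| + |α 1|) := by positivity
  have ht0 : |α 0| < t := by rw [htdef]; linarith
  have hvb : ∀ j, |v j| ≤ |α 0| + |α 1| := by
    intro j
    fin_cases j <;>
      simp only [hv, Fin.mk_zero, Fin.mk_one, show (⟨2, by omega⟩ : Fin 3) = 2 from rfl,
        Matrix.cons_val_zero, Matrix.cons_val_one, Matrix.head_cons,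
        Matrix.cons_val_two, Matrix.tail_cons, abs_neg, abs_zero] <;>
      [skip; skip; positivity] <;> linarith [abs_nonneg (α 0), abs_nonneg (α 1)]
  have htv : ∀ f : Fin 3 → Fin 3, |∑ i, α i * v (f i)| < t := by
    intro f
    rw [Fin.sum_univ_three]
    have h3 : |α 0 * v (f 0) + α 1 * v (f 1) + α 2 * v (f 2)| ≤
        |α 0 * v (f 0)| + |α 1 * v (f 1)| + |α 2 * v (f 2)| :=
      (abs_add_le _ _).trans (add_le_add (abs_add_le _ _) le_rfl)
    have b0 : |α 0 * v (f 0)| ≤ |α 0| * (|α 0| + |α 1|) := by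
      rw [abs_mul]; exact mul_le_mul_of_nonneg_left (hvb _) (abs_nonneg _)
    have b1 : |α 1 * v (f 1)| ≤ |α 1| * (|α 0| + |α 1|) := by
      rw [abs_mul]; exact mul_le_mul_of_nonneg_left (hvb _) (abs_nonneg _)
    have b2 : |α 2 * v (f 2)| ≤ |α 2| * (|α 0| + |α 1|) := by
      rw [abs_mul]; exact mul_le_mul_of_nonneg_left (hvb _) (abs_nonneg _)
    have hB : (|α 0| + |α 1| + |α 2|) * (|α 0| + |α 1|) =
        |α 0| * (|α 0| + |α 1|) + |α 1| * (|α 0| + |α 1|) + |α 2| * (|α 0| + |α 1|) := by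
      ring
    rw [htdef]
    linarith [abs_nonneg (α 0)]
  have htpos : 0 < t := lt_of_le_of_lt (abs_nonneg (α 0)) ht0
  refine ⟨fun i => v i + t * w i, ?_, ?_, ?_⟩
  · intro i
    fin_cases i
    · show v 0 + t * w 0 ≠ 0
      simp only [hv, hw, Matrix.cons_val_zero, mul_zero, add_zero]
      exact hα 1
    · show v 1 + t * w 1 ≠ 0
      simp only [hv, hw, Matrix.cons_val_one, Matrix.head_cons]
      exact lin_ne _ _ _ (by simpa using ht0) (hα 2)
    · show v 2 + t * w 2 ≠ 0
      simp only [hv, hw, Matrix.cons_val_two, Matrix.tail_cons, Matrix.head_cons]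
      have := lin_ne 0 (-α 1) t (by simpa using htpos) (neg_ne_zero.mpr (hα 1))
      simpa using this
  · simp only [hv, hw, Fin.sum_univ_three, Matrix.cons_val_zero, Matrix.cons_val_one,
      Matrix.head_cons, Matrix.cons_val_two, Matrix.tail_cons]
    ring
  · intro f hA hC h0
    have hexp : ∑ i, α i * (v (f i) + t * w (f i)) =
        (∑ i, α i * v (f i)) + t * (∑ i, α i * w (f i)) := by
      simp only [Fin.sum_univ_three]; ring
    rw [hexp] at h0
    by_cases hw0 : (∑ i, α i * w (f i)) = 0
    · by_cases hv0 : (∑ i, α i * v (f i)) = 0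
      · exact hA ((key α hα f hv0 hw0).resolve_right hC)
      · rw [hw0, mul_zero, add_zero] at h0; exact hv0 h0
    · exact lin_ne _ _ _ (htv f) hw0 h0
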